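/- arXiv:0911.4148 — 3 statements merged into one kernel-verified Lean document; each statement's English description precedes it below -/
import Mathlib

section
/- For a uniformly random permutation π of [n], let I = π(1) and fix reals x_1, ..., x_n with |x_1| ≥ |x_2| ≥ ... ≥ |x_n|, reals y_1, ..., y_n, and 0/1 indicators L_{z,i'} = 1 iff |x_z·y_{i'}| < c for a fixed c > 0. Define Z = x_1·y_I·L_{1,I} − (1/(n−1))·Σ_{z≠1} x_z·y_I·L_{z,I}. Then E[Z²] ≤ (4/n)·Σ_{i'} x_1²·y_{i'}²·L_{1,i'} + (1/(n(n−1)))·Σ_{z>1} Σ_{i'} x_z²·y_{i'}²·L_{z,i'}. -/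
open Finset

/-- Variance bound for the increment of the light-pairs martingale: with `I` uniform on
`[n]`, `|x_1| ≥ |x_2| ≥ …`, indicators `L_{z,i'} = 1{|x_z y_{i'}| < c}` and
`Z = x_1 y_I L_{1,I} − (n−1)⁻¹ ∑_{z≠1} x_z y_I L_{z,I}`, one has
`E[Z²] ≤ (4/n) ∑_{i'} x_1² y_{i'}² L_{1,i'} + (n(n−1))⁻¹ ∑_{z>1} ∑_{i'} x_z² y_{i'}² L_{z,i'}`.
Here `o : Fin n` plays the role of the first index `1`. -/
theorem stmt_6 (n : ℕ) (hn : 2 ≤ n) (x y : Fin n → ℝ) (c : ℝ) (hc : 0 < c)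
    (o : Fin n) (ho : (o : ℕ) = 0)
    (hmono : ∀ z z' : Fin n, z ≤ z' → |x z'| ≤ |x z|)
    (L : Fin n → Fin n → ℝ)
    (hL : ∀ z i', L z i' = if |x z * y i'| < c then 1 else 0)
    (Z : Fin n → ℝ)
    (hZ : ∀ I, Z I = x o * y I * L o I -
      (1 / ((n : ℝ) - 1)) * ∑ z ∈ univ.erase o, x z * y I * L z I) :
    (1 / (n : ℝ)) * ∑ I, (Z I) ^ 2 ≤
      (4 / (n : ℝ)) * ∑ i', (x o) ^ 2 * (y i') ^ 2 * L o i' +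
        (1 / ((n : ℝ) * ((n : ℝ) - 1))) *
          ∑ z ∈ univ.erase o, ∑ i', (x z) ^ 2 * (y i') ^ 2 * L z i' := by
  have hn2 : (2:ℝ) ≤ (n:ℝ) := by exact_mod_cast hn
  have hn1pos : (0:ℝ) < (n:ℝ) - 1 := by linarith
  have hnpos : (0:ℝ) < (n:ℝ) := by linarith
  have hcard : ((univ.erase o).card : ℝ) = (n:ℝ) - 1 := by
    rw [Finset.card_erase_of_mem (mem_univ o), Finset.card_univ, Fintype.card_fin]
    have : 1 ≤ n := by omega
    push_cast [Nat.cast_sub this]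
    ring
  have hLmem : ∀ z i', L z i' = 0 ∨ L z i' = 1 := by
    intro z i'; rw [hL]; split <;> simp
  have key : ∀ I, (Z I)^2 ≤ 4 * ((x o)^2 * (y I)^2 * L o I)
      + (1/((n:ℝ)-1)) * ∑ z ∈ univ.erase o, (x z)^2 * (y I)^2 * L z I := by
    intro I
    have hsum_nonneg : 0 ≤ ∑ z ∈ univ.erase o, (x z)^2 * (y I)^2 * L z I := by
      apply Finset.sum_nonneg; intro z _
      rcases hLmem z I with h|h <;> simp [h] <;> positivity
    by_cases hcase : |x o * y I| < c
    · have hLo : L o I = 1 := by rw [hL, if_pos hcase]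
      have habs : ∀ z, |x z * y I * L z I| ≤ |x o * y I| := by
        intro z
        have hle : |x z| ≤ |x o| := hmono o z (by
          rw [Fin.le_def, ho]; omega)
        rcases hLmem z I with h|h
        · simp [h]; positivity
        · simp only [h, mul_one, abs_mul]
          exact mul_le_mul_of_nonneg_right hle (abs_nonneg _)
      have hS : |∑ z ∈ univ.erase o, x z * y I * L z I| ≤ ((n:ℝ)-1) * |x o * y I| := by
        calc |∑ z ∈ univ.erase o, x z * y I * L z I|
            ≤ ∑ z ∈ univ.erase o, |x z * y I * L z I| :=
              Finset.abs_sum_le_sum_abs _ _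
          _ ≤ ∑ _z ∈ univ.erase o, |x o * y I| :=
              Finset.sum_le_sum (fun z _ => habs z)
          _ = ((n:ℝ)-1) * |x o * y I| := by
              rw [Finset.sum_const, nsmul_eq_mul, hcard]
      have hZabs : |Z I| ≤ 2 * |x o * y I| := by
        rw [hZ, hLo, mul_one]
        calc |x o * y I - (1 / ((n:ℝ) - 1)) * ∑ z ∈ univ.erase o, x z * y I * L z I|
            ≤ |x o * y I| + |(1 / ((n:ℝ) - 1)) * ∑ z ∈ univ.erase o, x z * y I * L z I| :=
              abs_sub _ _
          _ ≤ |x o * y I| + (1 / ((n:ℝ) - 1)) * (((n:ℝ)-1) * |x o * y I|) := by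
              gcongr
              rw [abs_mul, abs_of_pos (by positivity : (0:ℝ) < 1 / ((n:ℝ)-1))]
              gcongr
          _ = 2 * |x o * y I| := by field_simp; ring
      have h1 : (Z I)^2 ≤ (2 * |x o * y I|)^2 := by
        calc (Z I)^2 = |Z I|^2 := (sq_abs _).symm
          _ ≤ (2 * |x o * y I|)^2 := pow_le_pow_left₀ (abs_nonneg _) hZabs 2
      have h2 : (2 * |x o * y I|)^2 = 4 * ((x o)^2 * (y I)^2 * L o I) := by
        rw [hLo, mul_one, mul_pow, sq_abs, mul_pow]; ring
      calc (Z I)^2 ≤ 4 * ((x o)^2 * (y I)^2 * L o I) := by rw [← h2]; exact h1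
        _ ≤ _ := by
            have := mul_nonneg (le_of_lt (by positivity : (0:ℝ) < 1/((n:ℝ)-1))) hsum_nonneg
            linarith
    · have hLo : L o I = 0 := by rw [hL, if_neg hcase]
      have hZeq : Z I = -((1 / ((n:ℝ) - 1)) * ∑ z ∈ univ.erase o, x z * y I * L z I) := by
        rw [hZ, hLo]; ring
      have hCS : (∑ z ∈ univ.erase o, x z * y I * L z I)^2
          ≤ ((n:ℝ)-1) * ∑ z ∈ univ.erase o, (x z)^2 * (y I)^2 * L z I := by
        have := Finset.sum_mul_sq_le_sq_mul_sq (univ.erase o)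
          (fun _ => (1:ℝ)) (fun z => x z * y I * L z I)
        simp only [one_mul, one_pow] at this
        calc (∑ z ∈ univ.erase o, x z * y I * L z I)^2
            ≤ (∑ _z ∈ univ.erase o, (1:ℝ)) * ∑ z ∈ univ.erase o, (x z * y I * L z I)^2 :=
              this
          _ = ((n:ℝ)-1) * ∑ z ∈ univ.erase o, (x z)^2 * (y I)^2 * L z I := by
              rw [Finset.sum_const, nsmul_eq_mul, mul_one, hcard]
              congr 1
              apply Finset.sum_congr rfl
              intro z _
              rcases hLmem z I with h|h <;> rw [h] <;> ring
      calc (Z I)^2 = (1/((n:ℝ)-1))^2 * (∑ z ∈ univ.erase o, x z * y I * L z I)^2 := by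
            rw [hZeq]; ring
        _ ≤ (1/((n:ℝ)-1))^2 * (((n:ℝ)-1) * ∑ z ∈ univ.erase o, (x z)^2 * (y I)^2 * L z I) := by
            gcongr
        _ = (1/((n:ℝ)-1)) * ∑ z ∈ univ.erase o, (x z)^2 * (y I)^2 * L z I := by
            field_simp; exact Finset.sum_congr rfl (fun z _ => by ring)
        _ ≤ _ := by
            have hL0 : (0:ℝ) ≤ 4 * ((x o)^2 * (y I)^2 * L o I) := by
              rw [hLo]; ring_nf; simp
            linarith
  have hsum : ∑ I, (Z I)^2 ≤
      ∑ I, (4 * ((x o)^2 * (y I)^2 * L o I)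
        + (1/((n:ℝ)-1)) * ∑ z ∈ univ.erase o, (x z)^2 * (y I)^2 * L z I) :=
    Finset.sum_le_sum (fun I _ => key I)
  calc (1 / (n : ℝ)) * ∑ I, (Z I) ^ 2
      ≤ (1 / (n : ℝ)) * ∑ I, (4 * ((x o)^2 * (y I)^2 * L o I)
        + (1/((n:ℝ)-1)) * ∑ z ∈ univ.erase o, (x z)^2 * (y I)^2 * L z I) := by
        apply mul_le_mul_of_nonneg_left hsum (by positivity)
    _ = _ := by
        rw [Finset.sum_add_distrib, ← Finset.mul_sum, ← Finset.mul_sum,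
          Finset.sum_comm]
        field_simp
end

section
/- Let ε = 1/(d√N) with d ≥ 1, N ≥ 1. The number of points x in the lattice (εℤ)^N with ‖x‖ ≤ 1 is at most (√(2πe)·(d+1))^N. -/
open MeasureTheory Set Real

lemma gamma_lb {x : ℝ} (hx : 0 < x) : x ^ x * Real.exp (-x) ≤ Real.Gamma (x + 1) := by
  have hint : IntegrableOn (fun t : ℝ => Real.exp (-t) * t ^ x) (Ioi 0) := by
    simpa using Real.GammaIntegral_convergent (by linarith : (0:ℝ) < x + 1)
  have h1 : Real.Gamma (x + 1) = ∫ t in Ioi (0:ℝ), Real.exp (-t) * t ^ x := by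
    simpa using Real.Gamma_eq_integral (by linarith : (0:ℝ) < x + 1)
  have hsub : Ioi x ⊆ Ioi (0:ℝ) := Ioi_subset_Ioi hx.le
  have hint' : IntegrableOn (fun t : ℝ => Real.exp (-t) * t ^ x) (Ioi x) :=
    hint.mono_set hsub
  have hexp : IntegrableOn (fun t : ℝ => Real.exp (-t)) (Ioi x) := by
    have := exp_neg_integrableOn_Ioi x (b := 1) one_pos
    simpa using this
  have h2 : (∫ t in Ioi x, Real.exp (-t) * t ^ x) ≤ ∫ t in Ioi (0:ℝ), Real.exp (-t) * t ^ x := by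
    refine setIntegral_mono_set hint ?_ (HasSubset.Subset.eventuallyLE hsub)
    filter_upwards [ae_restrict_mem measurableSet_Ioi] with t ht
    exact mul_nonneg (Real.exp_pos _).le (Real.rpow_nonneg (le_of_lt ht) _)
  have h3 : (∫ t in Ioi x, Real.exp (-t) * x ^ x) ≤ ∫ t in Ioi x, Real.exp (-t) * t ^ x := by
    refine setIntegral_mono_on (hexp.mul_const _) hint' measurableSet_Ioi ?_
    intro t ht
    have h5 : x ^ x ≤ t ^ x := Real.rpow_le_rpow hx.le (le_of_lt ht) hx.le
    exact mul_le_mul_of_nonneg_left h5 (Real.exp_pos _).le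
  have h4 : (∫ t in Ioi x, Real.exp (-t) * x ^ x) = x ^ x * Real.exp (-x) := by
    rw [integral_mul_const, integral_exp_neg_Ioi, mul_comm]
  linarith [h1 ▸ le_trans (h4 ▸ h3) h2]

/-- The number of points of the lattice `(εℤ)^N`, with `ε = 1/(d√N)`, lying in the unit
Euclidean ball is at most `(√(2πe)·(d+1))^N`. -/
theorem stmt_7 (N : ℕ) (hN : 1 ≤ N) (d : ℝ) (hd : 1 ≤ d) :
    ({x : Fin N → ℝ |
        (∀ k, ∃ z : ℤ, x k = (z : ℝ) * (1 / (d * Real.sqrt N))) ∧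
        Real.sqrt (∑ k, (x k) ^ 2) ≤ 1}).Finite ∧
    ({x : Fin N → ℝ |
        (∀ k, ∃ z : ℤ, x k = (z : ℝ) * (1 / (d * Real.sqrt N))) ∧
        Real.sqrt (∑ k, (x k) ^ 2) ≤ 1}).ncard ≤
      (Real.sqrt (2 * Real.pi * Real.exp 1) * (d + 1)) ^ N := by
  have hd0 : (0:ℝ) < d := by linarith
  have hN0 : (0:ℝ) < (N:ℝ) := by exact_mod_cast hN
  have hsN : (0:ℝ) < Real.sqrt N := Real.sqrt_pos.2 hN0
  set ε : ℝ := 1 / (d * Real.sqrt N) with hεdef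
  have hε : 0 < ε := by positivity
  set S : Set (Fin N → ℝ) := {x : Fin N → ℝ |
      (∀ k, ∃ z : ℤ, x k = (z : ℝ) * ε) ∧ Real.sqrt (∑ k, (x k) ^ 2) ≤ 1} with hSdef
  -- each point of S has coordinates bounded by 1
  have habs : ∀ x ∈ S, ∀ k, |x k| ≤ 1 := by
    intro x hx k
    have hs0 : (0:ℝ) ≤ ∑ j, (x j) ^ 2 := Finset.sum_nonneg fun j _ => sq_nonneg _
    have hsq := Real.sq_sqrt hs0
    have hsum : (∑ j, (x j) ^ 2) ≤ 1 := by nlinarith [hx.2, Real.sqrt_nonneg (∑ j, (x j)^2)]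
    have hxk : (x k) ^ 2 ≤ ∑ j, (x j) ^ 2 :=
      Finset.single_le_sum (fun j _ => sq_nonneg (x j)) (Finset.mem_univ k)
    nlinarith [sq_abs (x k), abs_nonneg (x k)]
  -- finiteness
  have hFin : S.Finite := by
    set M : ℤ := ⌈d * Real.sqrt N⌉ with hM
    have hTfin : (Set.pi univ fun _ : Fin N => Set.Icc (-M) M).Finite :=
      Set.Finite.pi fun _ => Set.finite_Icc _ _
    refine ((hTfin.image (fun z : Fin N → ℤ => fun k => (z k : ℝ) * ε))).subset ?_
    intro x hx
    choose z hz using hx.1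
    refine ⟨z, fun k _ => ?_, funext fun k => (hz k).symm⟩
    have h1 : |x k| ≤ 1 := habs x hx k
    have h2 : |(z k : ℝ)| * ε ≤ 1 := by
      rw [← abs_of_pos hε, ← abs_mul, ← hz k]; exact h1
    have h3 : |(z k : ℝ)| ≤ d * Real.sqrt N := by
      have : (1:ℝ)/ε = d * Real.sqrt N := by rw [hεdef, one_div_one_div]
      rw [← this]
      rw [le_div_iff₀ hε] at *
      linarith [h2]
    have h4 : |(z k : ℝ)| ≤ (M : ℝ) := h3.trans (Int.le_ceil _)
    have h5 : |z k| ≤ M := by exact_mod_cast h4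
    exact Set.mem_Icc.2 (abs_le.1 h5)
  refine ⟨hFin, ?_⟩
  haveI : Nonempty (Fin N) := ⟨⟨0, hN⟩⟩
  set R : ℝ := 1 + 1/d with hRdef
  have hR : 0 < R := by positivity
  set F := hFin.toFinset with hFdef
  set C : (Fin N → ℝ) → Set (Fin N → ℝ) :=
    fun x => Set.pi univ fun k => Ioo (x k) (x k + ε) with hCdef
  have hCmeas : ∀ x, MeasurableSet (C x) :=
    fun x => MeasurableSet.univ_pi fun k => measurableSet_Ioo
  have hCvol : ∀ x, volume (C x) = ENNReal.ofReal ε ^ N := by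
    intro x
    rw [hCdef]
    simp only
    rw [volume_pi_pi]
    simp [Real.volume_Ioo]
  have hdisj : (↑F : Set (Fin N → ℝ)).PairwiseDisjoint C := by
    intro x hx y hy hxy
    rw [hFdef, Set.Finite.coe_toFinset] at hx hy
    have hk : ∃ k, x k ≠ y k := by
      by_contra h; push_neg at h; exact hxy (funext h)
    obtain ⟨k, hk⟩ := hk
    obtain ⟨z, hz⟩ := hx.1 k
    obtain ⟨w, hw⟩ := hy.1 k
    have hzw : z ≠ w := by rintro rfl; exact hk (hz.trans hw.symm)
    have h1 : (1:ℝ) ≤ |((z - w : ℤ) : ℝ)| := by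
      exact_mod_cast Int.one_le_abs (sub_ne_zero.2 hzw)
    push_cast at h1
    have hsep : ε ≤ |x k - y k| := by
      rw [hz, hw, ← sub_mul, abs_mul, abs_of_pos hε]
      nlinarith
    rw [Function.onFun, Set.disjoint_left]
    intro p hpx hpy
    have h2 := hpx k (Set.mem_univ k)
    have h3 := hpy k (Set.mem_univ k)
    simp only [Set.mem_Ioo] at h2 h3
    rcases le_abs.1 hsep with h | h
    · linarith
    · linarith
  set A : Set (Fin N → ℝ) := {w : Fin N → ℝ | Real.sqrt (∑ k, (w k) ^ 2) ≤ R} with hAdef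
  have hsubA : ∀ x ∈ F, C x ⊆ A := by
    intro x hxF p hp
    rw [hFdef, Set.Finite.mem_toFinset] at hxF
    set X : EuclideanSpace ℝ (Fin N) := WithLp.toLp 2 x with hX
    set P : EuclideanSpace ℝ (Fin N) := WithLp.toLp 2 p with hP
    have hPX : ‖P - X‖ ≤ 1/d := by
      rw [EuclideanSpace.norm_eq]
      have hterm : ∀ i, ‖(P - X) i‖ ^ 2 ≤ ε ^ 2 := by
        intro i
        have hpi := hp i (Set.mem_univ i)
        simp only [Set.mem_Ioo] at hpi
        have : ‖(P - X) i‖ ^ 2 = (p i - x i) ^ 2 := by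
          show ‖p i - x i‖ ^ 2 = _
          rw [Real.norm_eq_abs, sq_abs]
        rw [this]
        nlinarith [hpi.1, hpi.2]
      calc Real.sqrt (∑ i, ‖(P - X) i‖ ^ 2) ≤ Real.sqrt (∑ _i : Fin N, ε ^ 2) :=
            Real.sqrt_le_sqrt (Finset.sum_le_sum fun i _ => hterm i)
        _ = Real.sqrt ((N : ℝ) * ε ^ 2) := by
            rw [Finset.sum_const, Finset.card_univ, Fintype.card_fin, nsmul_eq_mul]
        _ = Real.sqrt N * ε := by
            rw [Real.sqrt_mul (le_of_lt hN0), Real.sqrt_sq hε.le]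
        _ = 1/d := by
            rw [hεdef]; field_simp
    have hnX : ‖X‖ ≤ 1 := by
      rw [EuclideanSpace.norm_eq]
      have : ∀ i, ‖X i‖ ^ 2 = (x i) ^ 2 := fun i => by
        show ‖x i‖ ^ 2 = _; rw [Real.norm_eq_abs, sq_abs]
      simp only [this]
      exact hxF.2
    have hnP : ‖P‖ ≤ R := by
      calc ‖P‖ = ‖X + (P - X)‖ := by rw [add_sub_cancel]
        _ ≤ ‖X‖ + ‖P - X‖ := norm_add_le _ _
        _ ≤ 1 + 1/d := add_le_add hnX hPX
    have : Real.sqrt (∑ k, (p k) ^ 2) ≤ R := by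
      have hPe : ‖P‖ = Real.sqrt (∑ k, (p k) ^ 2) := by
        rw [EuclideanSpace.norm_eq]
        congr 1
        refine Finset.sum_congr rfl fun i _ => ?_
        show ‖p i‖ ^ 2 = _; rw [Real.norm_eq_abs, sq_abs]
      rw [← hPe]; exact hnP
    exact this
  have hAmeas : MeasurableSet A := by
    have hcont : Continuous fun w : Fin N → ℝ => Real.sqrt (∑ k, (w k) ^ 2) := by
      fun_prop
    exact measurableSet_Iic.preimage hcont.measurable
  have hAvol : volume A = ENNReal.ofReal R ^ N *
      ENNReal.ofReal (Real.sqrt π ^ N / Real.Gamma ((N:ℝ) / 2 + 1)) := by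
    have hpre : (MeasurableEquiv.toLp 2 (Fin N → ℝ)).symm ⁻¹' A
        = Metric.closedBall (0 : EuclideanSpace ℝ (Fin N)) R := by
      ext w
      simp only [Set.mem_preimage, Metric.mem_closedBall, dist_zero_right, hAdef,
        Set.mem_setOf_eq]
      rw [EuclideanSpace.norm_eq]
      constructor
      · intro h
        calc Real.sqrt (∑ i, ‖w i‖ ^ 2)
            = Real.sqrt (∑ i, ((MeasurableEquiv.toLp 2 (Fin N → ℝ)).symm w i) ^ 2) := by
              congr 1
              refine Finset.sum_congr rfl fun i _ => ?_
              show ‖w i‖ ^ 2 = (w i) ^ 2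
              rw [Real.norm_eq_abs, sq_abs]
          _ ≤ R := h
      · intro h
        calc Real.sqrt (∑ i, ((MeasurableEquiv.toLp 2 (Fin N → ℝ)).symm w i) ^ 2)
            = Real.sqrt (∑ i, ‖w i‖ ^ 2) := by
              congr 1
              refine Finset.sum_congr rfl fun i _ => ?_
              show (w i) ^ 2 = ‖w i‖ ^ 2
              rw [Real.norm_eq_abs, sq_abs]
          _ ≤ R := h
    have hmp := (EuclideanSpace.volume_preserving_symm_measurableEquiv_toLp
      (Fin N)).measure_preimage hAmeas.nullMeasurableSet
    rw [hpre] at hmp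
    rw [← hmp, EuclideanSpace.volume_closedBall, Fintype.card_fin]
  have hEN : (F.card : ENNReal) * ENNReal.ofReal ε ^ N ≤ volume A := by
    calc (F.card : ENNReal) * ENNReal.ofReal ε ^ N = ∑ x ∈ F, volume (C x) := by
          simp [hCvol, Finset.sum_const, nsmul_eq_mul]
      _ = volume (⋃ x ∈ F, C x) :=
          (measure_biUnion_finset hdisj fun x _ => hCmeas x).symm
      _ ≤ volume A := measure_mono (by
          intro p hp
          simp only [Set.mem_iUnion] at hp
          obtain ⟨x, hxF, hpx⟩ := hp
          exact hsubA x hxF hpx)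
  have hΓpos : 0 < Real.Gamma ((N:ℝ)/2 + 1) := Real.Gamma_pos_of_pos (by positivity)
  have hπs : (0:ℝ) ≤ Real.sqrt π ^ N / Real.Gamma ((N:ℝ)/2 + 1) :=
    div_nonneg (pow_nonneg (Real.sqrt_nonneg _) _) hΓpos.le
  have hreal : (F.card : ℝ) * ε ^ N ≤ R ^ N * (Real.sqrt π ^ N / Real.Gamma ((N:ℝ)/2 + 1)) := by
    rw [hAvol] at hEN
    have hne : ENNReal.ofReal R ^ N *
        ENNReal.ofReal (Real.sqrt π ^ N / Real.Gamma ((N:ℝ)/2 + 1)) ≠ ⊤ := by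
      exact ENNReal.mul_ne_top (ENNReal.pow_ne_top ENNReal.ofReal_ne_top) ENNReal.ofReal_ne_top
    have := ENNReal.toReal_mono hne hEN
    rw [ENNReal.toReal_mul, ENNReal.toReal_pow, ENNReal.toReal_ofReal hε.le,
      ENNReal.toReal_natCast, ENNReal.toReal_mul, ENNReal.toReal_pow,
      ENNReal.toReal_ofReal hR.le, ENNReal.toReal_ofReal hπs] at this
    exact this
  -- lower bound for Gamma
  set B : ℝ := Real.sqrt ((N:ℝ) / (2 * Real.exp 1)) with hBdef
  have h2e : (0:ℝ) < 2 * Real.exp 1 := by positivity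
  have hB : 0 < B := Real.sqrt_pos.2 (by positivity)
  have hΓ : B ^ N ≤ Real.Gamma ((N:ℝ)/2 + 1) := by
    have hg := gamma_lb (x := (N:ℝ)/2) (by positivity)
    have heq : B ^ N = ((N:ℝ)/2) ^ ((N:ℝ)/2) * Real.exp (-((N:ℝ)/2)) := by
      have h1 : B ^ N = ((N:ℝ) / (2 * Real.exp 1)) ^ ((N:ℝ)/2) := by
        rw [hBdef, Real.sqrt_eq_rpow, ← Real.rpow_natCast (((N:ℝ) / (2 * Real.exp 1)) ^ ((1:ℝ)/2)) N,
          ← Real.rpow_mul (by positivity)]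
        congr 1
        ring
      have h2 : ((N:ℝ) / (2 * Real.exp 1)) ^ ((N:ℝ)/2)
          = ((N:ℝ)/2) ^ ((N:ℝ)/2) * Real.exp (-((N:ℝ)/2)) := by
        have hsplit : (N:ℝ) / (2 * Real.exp 1) = ((N:ℝ)/2) * (Real.exp 1)⁻¹ := by
          field_simp
        rw [hsplit, Real.mul_rpow (by positivity) (by positivity),
          Real.inv_rpow (Real.exp_pos 1).le, Real.exp_one_rpow, ← Real.exp_neg]
      rw [h1, h2]
    rw [heq]
    exact hg
  have hs2e : (0:ℝ) < Real.sqrt (2 * Real.exp 1) := Real.sqrt_pos.2 h2e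
  have hεB : ε * B = 1 / (d * Real.sqrt (2 * Real.exp 1)) := by
    have hBalt : B = Real.sqrt N / Real.sqrt (2 * Real.exp 1) := by
      rw [hBdef, Real.sqrt_div hN0.le]
    rw [hBalt, hεdef]
    field_simp
  have hfrac : (R * Real.sqrt π) / (ε * B) = Real.sqrt (2 * π * Real.exp 1) * (d + 1) := by
    rw [hεB, hRdef]
    have hππ : Real.sqrt (2 * π * Real.exp 1) = Real.sqrt π * Real.sqrt (2 * Real.exp 1) := by
      rw [← Real.sqrt_mul Real.pi_pos.le]
      ring_nf
    rw [hππ]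
    field_simp
  have hfinal : (F.card : ℝ) ≤ ((R * Real.sqrt π) / (ε * B)) ^ N := by
    rw [div_pow, le_div_iff₀ (by positivity)]
    calc (F.card : ℝ) * (ε * B) ^ N = ((F.card : ℝ) * ε ^ N) * B ^ N := by
          rw [mul_pow]; ring
      _ ≤ (R ^ N * (Real.sqrt π ^ N / Real.Gamma ((N:ℝ)/2 + 1))) * B ^ N :=
          mul_le_mul_of_nonneg_right hreal (pow_nonneg hB.le N)
      _ ≤ (R ^ N * (Real.sqrt π ^ N / Real.Gamma ((N:ℝ)/2 + 1))) * Real.Gamma ((N:ℝ)/2 + 1) :=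
          mul_le_mul_of_nonneg_left hΓ (by positivity)
      _ = R ^ N * Real.sqrt π ^ N := by
          rw [mul_assoc, div_mul_cancel₀ _ hΓpos.ne']
      _ = (R * Real.sqrt π) ^ N := (mul_pow _ _ _).symm
  rw [Set.ncard_eq_toFinset_card S hFin]
  rw [← hfrac]
  exact hfinal
end

section
/- Let G be a d-regular graph on m vertices with Cheeger constant h(G) = min over nonempty proper subsets S of |∂S|/min(|S|,|V∖S|), and second eigenvalue λ₂ of its adjacency matrix. Then (d − λ₂)/2 ≤ h(G). -/
open Finset
open scoped Classical

open Matrix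


lemma eigvec_const {m d : ℕ} (G : SimpleGraph (Fin m)) (hconn : G.Connected)
    (hreg : G.IsRegularOfDegree d) (v : Fin m → ℝ)
    (hv : G.adjMatrix ℝ *ᵥ v = (d : ℝ) • v) (u w : Fin m) : v u = v w := by
  obtain ⟨u₀, -, hmax⟩ := Finset.exists_max_image (univ : Finset (Fin m)) v ⟨u, mem_univ u⟩
  have key : ∀ a b : Fin m, G.Adj a b → v a = v u₀ → v b = v u₀ := by
    intro a b hab ha
    by_contra hb
    have hlt : v b < v u₀ := lt_of_le_of_ne (hmax b (mem_univ b)) hb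
    have hsum : ∑ z ∈ G.neighborFinset a, v z < ∑ z ∈ G.neighborFinset a, v u₀ :=
      Finset.sum_lt_sum (fun z _ => hmax z (mem_univ z))
        ⟨b, by simp [hab], hlt⟩
    rw [Finset.sum_const, G.card_neighborFinset_eq_degree, hreg a, nsmul_eq_mul] at hsum
    have h2 : (G.adjMatrix ℝ *ᵥ v) a = (d : ℝ) * v a := by rw [hv]; simp
    rw [SimpleGraph.adjMatrix_mulVec_apply, ha] at h2
    linarith
  have step : ∀ {a b : Fin m} (_ : G.Walk a b), v a = v u₀ → v b = v u₀ := by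
    intro a b p
    induction p with
    | nil => exact id
    | cons h _ ih => intro ha; exact ih (key _ _ h ha)
  obtain ⟨p⟩ := hconn u₀ u
  obtain ⟨q⟩ := hconn u₀ w
  rw [step p rfl, step q rfl]

lemma quad_bound {m : ℕ} (A : Matrix (Fin m) (Fin m) ℝ) (hA : A.IsHermitian)
    (i₀ : Fin m) (lam2 : ℝ)
    (hub : ∀ i, i ≠ i₀ → hA.eigenvalues i ≤ lam2)
    (x : EuclideanSpace ℝ (Fin m))
    (hx : (hA.eigenvectorBasis i₀ : EuclideanSpace ℝ (Fin m)) ⬝ᵥ x = 0) :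
    x ⬝ᵥ (A *ᵥ x) ≤ lam2 * (x ⬝ᵥ x) := by
  set b := hA.eigenvectorBasis with hb
  have hinner : ∀ y z : EuclideanSpace ℝ (Fin m), (inner ℝ y z : ℝ) = y ⬝ᵥ z := by
    intro y z
    simp [PiLp.inner_apply, RCLike.inner_apply, dotProduct, mul_comm]
  have hrepr : ∀ (y : EuclideanSpace ℝ (Fin m)) i,
      b.repr y i = (b i : EuclideanSpace ℝ (Fin m)) ⬝ᵥ y := by
    intro y i
    rw [OrthonormalBasis.repr_apply_apply, hinner]
  have hsym : Aᵀ = A := by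
    rw [← Matrix.conjTranspose_eq_transpose_of_trivial]; exact hA
  have hAx : ∀ i, b.repr (WithLp.toLp 2 (A *ᵥ (x : Fin m → ℝ)) : EuclideanSpace ℝ (Fin m)) i
      = hA.eigenvalues i * b.repr x i := by
    intro i
    rw [hrepr, hrepr]
    show (b i : EuclideanSpace ℝ (Fin m)) ⬝ᵥ (A *ᵥ (x : Fin m → ℝ)) = _
    rw [Matrix.dotProduct_mulVec, ← Matrix.mulVec_transpose, hsym]
    have h : (A *ᵥ (hA.eigenvectorBasis i : Fin m → ℝ)) ⬝ᵥ x
        = (hA.eigenvalues i • (hA.eigenvectorBasis i : Fin m → ℝ)) ⬝ᵥ x :=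
      congrArg (· ⬝ᵥ x) (hA.mulVec_eigenvectorBasis i)
    exact h.trans (by rw [smul_dotProduct, smul_eq_mul])
  have hiso : ∀ y z : EuclideanSpace ℝ (Fin m),
      y ⬝ᵥ z = ∑ i, b.repr y i * b.repr z i := by
    intro y z
    rw [← hinner, ← b.repr.inner_map_map y z, hinner]
    rfl
  have h1 : x ⬝ᵥ (A *ᵥ x) = ∑ i, hA.eigenvalues i * (b.repr x i)^2 := by
    rw [show x ⬝ᵥ (A *ᵥ x) = x ⬝ᵥ ((WithLp.toLp 2 (A *ᵥ (x : Fin m → ℝ))) :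
      EuclideanSpace ℝ (Fin m)) from rfl, hiso]
    refine Finset.sum_congr rfl fun i _ => ?_
    rw [hAx i]; ring
  have h2 : x ⬝ᵥ x = ∑ i, (b.repr x i)^2 := by
    rw [hiso]
    refine Finset.sum_congr rfl fun i _ => ?_; ring
  have hx0 : b.repr x i₀ = 0 := by rw [hrepr]; exact hx
  rw [h1, h2, Finset.mul_sum]
  refine Finset.sum_le_sum fun i _ => ?_
  by_cases hi : i = i₀
  · subst hi; rw [hx0]; simp
  · exact mul_le_mul_of_nonneg_right (hub i hi) (sq_nonneg _)

lemma bdry_card {m : ℕ} (G : SimpleGraph (Fin m)) (S : Finset (Fin m)) :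
    (G.edgeFinset.filter (fun e => ∃ a ∈ S, ∃ b ∉ S, e = s(a, b))).card
      = ((univ ×ˢ univ : Finset (Fin m × Fin m)).filter
          (fun p => p.1 ∈ S ∧ p.2 ∉ S ∧ G.Adj p.1 p.2)).card := by
  symm
  refine Finset.card_bij (fun p _ => s(p.1, p.2)) ?_ ?_ ?_
  · intro p hp
    rw [Finset.mem_filter] at hp
    obtain ⟨-, h1, h2, h3⟩ := hp
    exact Finset.mem_filter.2 ⟨SimpleGraph.mem_edgeFinset.2 h3, p.1, h1, p.2, h2, rfl⟩
  · intro p hp q hq h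
    rw [Finset.mem_filter] at hp hq
    rcases Sym2.eq_iff.1 h with ⟨h1, h2⟩ | ⟨h1, h2⟩
    · exact Prod.ext h1 h2
    · exact absurd (h1 ▸ hp.2.1) hq.2.2.1
  · intro e he
    rw [Finset.mem_filter] at he
    obtain ⟨hef, a, ha, b, hb, rfl⟩ := he
    exact ⟨(a, b), Finset.mem_filter.2 ⟨Finset.mem_product.2 ⟨mem_univ _, mem_univ _⟩,
      ha, hb, (G.mem_edgeSet).1 (SimpleGraph.mem_edgeFinset.1 hef)⟩, rfl⟩

lemma pair_card_eq_sum {m : ℕ} (G : SimpleGraph (Fin m)) (S : Finset (Fin m)) :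
    ((((univ ×ˢ univ : Finset (Fin m × Fin m)).filter
          (fun p => p.1 ∈ S ∧ p.2 ∉ S ∧ G.Adj p.1 p.2)).card : ℝ))
      = ∑ u ∈ S, ∑ w ∈ univ \ S, G.adjMatrix ℝ u w := by
  rw [Finset.card_filter]
  push_cast
  rw [Finset.sum_product]
  have hC : ∀ f : Fin m → ℝ, ∑ u ∈ univ \ S, f u = ∑ u : Fin m, if u ∉ S then f u else 0 := by
    intro f
    rw [show (∑ u : Fin m, if u ∉ S then f u else 0)
        = ∑ u : Fin m, if u ∈ univ \ S then f u else 0 from by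
      refine Finset.sum_congr rfl fun u _ => by simp [Finset.mem_sdiff]]
    rw [Finset.sum_ite_mem, Finset.univ_inter]
  have hS : ∀ f : Fin m → ℝ, ∑ u ∈ S, f u = ∑ u : Fin m, if u ∈ S then f u else 0 := by
    intro f; rw [Finset.sum_ite_mem, Finset.univ_inter]
  rw [hS]
  refine Finset.sum_congr rfl fun u _ => ?_
  by_cases hu : u ∈ S
  · simp only [hu, if_true, true_and]
    rw [hC]
    refine Finset.sum_congr rfl fun w _ => ?_
    by_cases hw : w ∈ S <;> by_cases h3 : G.Adj u w <;> simp [hw, h3]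
  · simp [hu]

lemma final_arith (dR lam2 aR bR E : ℝ) (ha0 : 0 < aR) (hb0 : 0 < bR) (hE0 : 0 ≤ E)
    (hkey : (dR - lam2) * (aR * bR) ≤ E * (aR + bR)) :
    (dR - lam2) / 2 ≤ E / min bR aR := by
  have hk0 : 0 < min bR aR := lt_min hb0 ha0
  rw [le_div_iff₀ hk0]
  rcases le_or_gt (dR - lam2) 0 with hdl | hdl
  · nlinarith [hE0, hk0.le]
  · have hka : min bR aR ≤ aR := min_le_right _ _
    have hkb : min bR aR ≤ bR := min_le_left _ _
    have hn0 : 0 < aR + bR := by linarith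
    have h6 : (min bR aR) * (aR + bR) ≤ 2 * (aR * bR) := by nlinarith
    nlinarith [mul_le_mul_of_nonneg_left h6 hdl.le, hkey, hn0, mul_pos hdl hk0]

/-- Easy direction of the discrete Cheeger inequality: if `G` is a connected `d`-regular
graph on `m` vertices with second largest adjacency eigenvalue `λ₂`, then for every
nonempty proper vertex subset `S`, `(d − λ₂)/2 ≤ |∂S| / min(|S|, |Sᶜ|)`; that is,
`(d − λ₂)/2 ≤ h(G)`. -/
theorem stmt_18 (m d : ℕ) (hm : 2 ≤ m) (G : SimpleGraph (Fin m))
    (hconn : G.Connected) (hreg : G.IsRegularOfDegree d)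
    (hA : (G.adjMatrix ℝ).IsHermitian) (i₀ : Fin m)
    (hi₀ : hA.eigenvalues i₀ = d) (lam2 : ℝ)
    (hlam2 : IsGreatest {μ : ℝ | ∃ i ≠ i₀, hA.eigenvalues i = μ} lam2) :
    ∀ S : Finset (Fin m), S.Nonempty → S ≠ univ →
      ((d : ℝ) - lam2) / 2 ≤
        ((G.edgeFinset.filter (fun e => ∃ a ∈ S, ∃ b ∉ S, e = s(a, b))).card : ℝ) /
          min (S.card : ℝ) ((univ \ S).card : ℝ) := by
  intro S hS hSu
  set A := G.adjMatrix ℝ with hAdef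
  set bR : ℝ := (S.card : ℝ) with hbR
  set aR : ℝ := ((univ \ S).card : ℝ) with haR
  have hb0 : 0 < bR := by
    rw [hbR]; exact_mod_cast Finset.card_pos.2 hS
  have ha0 : 0 < aR := by
    rw [haR]
    exact_mod_cast Finset.card_pos.2 (Finset.sdiff_nonempty.2
      (fun h => hSu (Finset.univ_subset_iff.1 h)))
  have habm : aR + bR = m := by
    rw [haR, hbR]
    have := Finset.card_sdiff_add_card_eq_card (Finset.subset_univ S)
    rw [Finset.card_univ, Fintype.card_fin] at this
    exact_mod_cast this
  -- test vector
  set x : Fin m → ℝ := fun u => if u ∈ S then aR else -bR with hxdef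
  have hxS : ∀ u ∈ S, x u = aR := fun u hu => by simp [hxdef, hu]
  have hxC : ∀ u ∈ univ \ S, x u = -bR := fun u hu => by
    simp [hxdef, (Finset.mem_sdiff.1 hu).2]
  have hsplit : ∀ f : Fin m → ℝ, ∑ u, f u = (∑ u ∈ univ \ S, f u) + ∑ u ∈ S, f u :=
    fun f => (Finset.sum_sdiff (Finset.subset_univ S)).symm
  -- orthogonality to the constant eigenvector
  have hv : A *ᵥ (hA.eigenvectorBasis i₀ : Fin m → ℝ)
      = (d : ℝ) • (hA.eigenvectorBasis i₀ : Fin m → ℝ) := by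
    have := hA.mulVec_eigenvectorBasis i₀
    rwa [hi₀] at this
  have hvconst := eigvec_const G hconn hreg _ hv
  have hxsum : ∑ u, x u = 0 := by
    rw [hsplit]
    rw [Finset.sum_congr rfl hxC, Finset.sum_congr rfl hxS,
      Finset.sum_const, Finset.sum_const, nsmul_eq_mul, nsmul_eq_mul, ← haR, ← hbR]
    ring
  have hu₁ : (0 : ℕ) < m := by omega
  have hx0 : (hA.eigenvectorBasis i₀ : EuclideanSpace ℝ (Fin m)) ⬝ᵥ x = 0 := by
    have : ∀ u, (hA.eigenvectorBasis i₀ : Fin m → ℝ) u * x u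
        = (hA.eigenvectorBasis i₀ : Fin m → ℝ) ⟨0, hu₁⟩ * x u := by
      intro u; rw [hvconst u ⟨0, hu₁⟩]
    show ∑ u, (hA.eigenvectorBasis i₀ : Fin m → ℝ) u * x u = 0
    rw [Finset.sum_congr rfl (fun u _ => this u), ← Finset.mul_sum, hxsum, mul_zero]
  have hub : ∀ i, i ≠ i₀ → hA.eigenvalues i ≤ lam2 := fun i hi => hlam2.2 ⟨i, hi, rfl⟩
  have hq : x ⬝ᵥ (A *ᵥ x) ≤ lam2 * (x ⬝ᵥ x) := quad_bound A hA i₀ lam2 hub (WithLp.toLp 2 x) hx0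
  -- block sums
  set eSS : ℝ := ∑ u ∈ S, ∑ w ∈ S, A u w with heSS
  set eSC : ℝ := ∑ u ∈ S, ∑ w ∈ univ \ S, A u w with heSC
  set eCS : ℝ := ∑ u ∈ univ \ S, ∑ w ∈ S, A u w with heCS
  set eCC : ℝ := ∑ u ∈ univ \ S, ∑ w ∈ univ \ S, A u w with heCC
  have hrow : ∀ u, (∑ w ∈ univ \ S, A u w) + ∑ w ∈ S, A u w = d := by
    intro u
    rw [← hsplit]
    have : ∑ w, A u w = ((G.neighborFinset u).card : ℝ) := by
      rw [hAdef]
      simp only [SimpleGraph.adjMatrix_apply]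
      rw [Finset.sum_boole, SimpleGraph.neighborFinset_eq_filter]
    rw [this, G.card_neighborFinset_eq_degree, hreg u]
  have h1 : eSC + eSS = d * bR := by
    rw [heSC, heSS, ← Finset.sum_add_distrib, Finset.sum_congr rfl (fun u _ => hrow u),
      Finset.sum_const, nsmul_eq_mul, ← hbR, mul_comm]
  have h2 : eCC + eCS = d * aR := by
    rw [heCC, heCS, ← Finset.sum_add_distrib, Finset.sum_congr rfl (fun u _ => hrow u),
      Finset.sum_const, nsmul_eq_mul, ← haR, mul_comm]
  have h3 : eSC = eCS := by
    rw [heSC, heCS]; refine Finset.sum_comm.trans ?_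
    refine Finset.sum_congr rfl fun u _ => Finset.sum_congr rfl fun w _ => ?_
    simp [hAdef, SimpleGraph.adjMatrix_apply, SimpleGraph.adj_comm]
  set E : ℝ := ((G.edgeFinset.filter (fun e => ∃ a ∈ S, ∃ b ∉ S, e = s(a, b))).card : ℝ)
    with hE
  have h4 : E = eSC := by
    rw [hE, heSC]
    rw [show ((G.edgeFinset.filter (fun e => ∃ a ∈ S, ∃ b ∉ S, e = s(a, b))).card : ℝ)
        = ((((univ ×ˢ univ : Finset (Fin m × Fin m)).filter
          (fun p => p.1 ∈ S ∧ p.2 ∉ S ∧ G.Adj p.1 p.2)).card : ℝ) : ℝ) from by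
      rw [bdry_card G S]]
    exact pair_card_eq_sum G S
  have hE0 : 0 ≤ E := by rw [hE]; positivity
  -- quadratic form values
  have hpull : ∀ (T U : Finset (Fin m)) (c1 c2 : ℝ),
      (∑ u ∈ T, ∑ w ∈ U, c1 * (A u w * c2)) = c1 * c2 * ∑ u ∈ T, ∑ w ∈ U, A u w := by
    intro T U c1 c2
    rw [Finset.mul_sum]
    refine Finset.sum_congr rfl fun u _ => ?_
    rw [Finset.mul_sum]
    exact Finset.sum_congr rfl fun w _ => by ring
  have hxx : x ⬝ᵥ x = aR * bR * (aR + bR) := by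
    show ∑ u, x u * x u = _
    rw [hsplit]
    have e1 : ∑ u ∈ univ \ S, x u * x u = ∑ u ∈ univ \ S, bR * bR :=
      Finset.sum_congr rfl fun u hu => by rw [hxC u hu]; ring
    have e2 : ∑ u ∈ S, x u * x u = ∑ u ∈ S, aR * aR :=
      Finset.sum_congr rfl fun u hu => by rw [hxS u hu]
    rw [e1, e2, Finset.sum_const, Finset.sum_const, nsmul_eq_mul, nsmul_eq_mul, ← haR, ← hbR]
    ring
  have inner : ∀ u, (∑ w, A u w * x w)
      = (∑ w ∈ univ \ S, A u w) * (-bR) + (∑ w ∈ S, A u w) * aR := by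
    intro u
    rw [hsplit (fun w => A u w * x w)]
    have i1 : ∑ w ∈ univ \ S, A u w * x w = ∑ w ∈ univ \ S, A u w * (-bR) :=
      Finset.sum_congr rfl fun w hw => by rw [hxC w hw]
    have i2 : ∑ w ∈ S, A u w * x w = ∑ w ∈ S, A u w * aR :=
      Finset.sum_congr rfl fun w hw => by rw [hxS w hw]
    rw [i1, i2, ← Finset.sum_mul, ← Finset.sum_mul]
  have hQ : x ⬝ᵥ (A *ᵥ x)
      = aR * aR * eSS + aR * (-bR) * eSC + (-bR) * aR * eCS + (-bR) * (-bR) * eCC := by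
    show ∑ u, x u * ∑ w, A u w * x w = _
    have e0 : ∑ u, x u * ∑ w, A u w * x w
        = ∑ u, x u * ((∑ w ∈ univ \ S, A u w) * (-bR) + (∑ w ∈ S, A u w) * aR) :=
      Finset.sum_congr rfl fun u _ => by rw [inner u]
    rw [e0, hsplit]
    have o1 : ∑ u ∈ univ \ S, x u * ((∑ w ∈ univ \ S, A u w) * (-bR) + (∑ w ∈ S, A u w) * aR)
        = ∑ u ∈ univ \ S, ((∑ w ∈ univ \ S, A u w) * ((-bR) * (-bR))
            + (∑ w ∈ S, A u w) * ((-bR) * aR)) :=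
      Finset.sum_congr rfl fun u hu => by rw [hxC u hu]; ring
    have o2 : ∑ u ∈ S, x u * ((∑ w ∈ univ \ S, A u w) * (-bR) + (∑ w ∈ S, A u w) * aR)
        = ∑ u ∈ S, ((∑ w ∈ univ \ S, A u w) * (aR * (-bR))
            + (∑ w ∈ S, A u w) * (aR * aR)) :=
      Finset.sum_congr rfl fun u hu => by rw [hxS u hu]; ring
    rw [o1, o2, Finset.sum_add_distrib, Finset.sum_add_distrib,
      ← Finset.sum_mul, ← Finset.sum_mul, ← Finset.sum_mul, ← Finset.sum_mul,
      ← heSS, ← heSC, ← heCS, ← heCC]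
    ring
  -- closed form
  have hQ2 : x ⬝ᵥ (A *ᵥ x) = (d : ℝ) * aR * bR * (aR + bR) - E * (aR + bR)^2 := by
    rw [hQ]
    linear_combination (aR^2) * h1 + (bR^2) * h2 + (bR^2 + aR*bR) * h3 + ((aR+bR)^2) * h4
  have hn0 : 0 < aR + bR := by linarith
  have hkey : ((d:ℝ) - lam2) * (aR * bR) ≤ E * (aR + bR) := by
    rw [hQ2, hxx] at hq
    have h' : ((d:ℝ) - lam2) * (aR * bR) * (aR + bR) ≤ (E * (aR + bR)) * (aR + bR) := by
      nlinarith [hq]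
    exact le_of_mul_le_mul_right h' hn0
  exact final_arith d lam2 aR bR E ha0 hb0 hE0 hkey
end
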